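/- A left R-module G is X-Gorenstein projective if and only if Ext^i_R(G,X) = 0 for all X ∈ X and all i > 0, and there exists an exact sequence 0 → G → P^0 → P^1 → ... with each P^i projective that remains exact after applying Hom_R(-,X) for every X ∈ X. -/

import Mathlib

open CategoryTheory DirectSum

universe u

/-- An `𝒳`-complete projective resolution: a doubly infinite exact sequence of
projective `R`-modules that remains exact after applying `Hom_R(-, Y)`
for every `Y` in the class `𝒳`. -/
structure XCompleteResolution (R : Type u) [Ring R] (𝒳 : ModuleCat.{u} R → Prop) where
  P : ℤ → ModuleCat.{u} R
  d : ∀ n : ℤ, P n →ₗ[R] P (n + 1)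
  projective : ∀ n, Module.Projective R (P n)
  exact : ∀ n, Function.Exact (d n) (d (n + 1))
  homExact : ∀ (Y : ModuleCat.{u} R), 𝒳 Y → ∀ n : ℤ,
    Function.Exact (fun f : P (n + 1 + 1) →ₗ[R] Y => f ∘ₗ d (n + 1))
      (fun f : P (n + 1) →ₗ[R] Y => f ∘ₗ d n)

/-- `G` is `𝒳`-Gorenstein projective: it is a kernel in an `𝒳`-complete
projective resolution. -/
def XGorensteinProjective (R : Type u) [Ring R] (𝒳 : ModuleCat.{u} R → Prop)
    (G : ModuleCat.{u} R) : Prop :=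
  ∃ C : XCompleteResolution R 𝒳, Nonempty (G ≃ₗ[R] LinearMap.ker (C.d 0))

/-- `ResWithKernel R 𝒞 n K M` says that there is an exact sequence
`0 → K → G_{n-1} → ⋯ → G_0 → M → 0` in which every `G_i` belongs to the class `𝒞`. -/
def ResWithKernel (R : Type u) [Ring R] (𝒞 : ModuleCat.{u} R → Prop) :
    ℕ → ModuleCat.{u} R → ModuleCat.{u} R → Prop
  | 0, K, M => Nonempty (K ≃ₗ[R] M)
  | n + 1, K, M => ∃ (G L : ModuleCat.{u} R) (f : L →ₗ[R] G) (g : G →ₗ[R] M),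
      𝒞 G ∧ Function.Injective f ∧ Function.Surjective g ∧ Function.Exact f g ∧
      ResWithKernel R 𝒞 n K L

/-- The resolution dimension of `M` with respect to a class `𝒞` of modules:
the least length of a resolution of `M` by modules in `𝒞` (`⊤` if none exists). -/
noncomputable def relDim (R : Type u) [Ring R] (𝒞 : ModuleCat.{u} R → Prop)
    (M : ModuleCat.{u} R) : ℕ∞ :=
  sInf {n : ℕ∞ | ∃ m : ℕ, n = m ∧ ∃ K, 𝒞 K ∧ ResWithKernel R 𝒞 m K M}

/-- The `𝒳`-Gorenstein projective dimension of `M`. -/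
noncomputable def xGpd (R : Type u) [Ring R] (𝒳 : ModuleCat.{u} R → Prop)
    (M : ModuleCat.{u} R) : ℕ∞ :=
  relDim R (XGorensteinProjective R 𝒳) M

/-- The projective dimension of `M`. -/
noncomputable def pdim (R : Type u) [Ring R] (M : ModuleCat.{u} R) : ℕ∞ :=
  relDim R (fun N => Module.Projective R N) M

/-- The Gorenstein projective dimension of `M`:
the `𝒳`-Gorenstein projective dimension for `𝒳` the class of projective modules. -/
noncomputable def gpd (R : Type u) [Ring R] (M : ModuleCat.{u} R) : ℕ∞ :=
  xGpd R (fun N => Module.Projective R N) M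

/-! ### Auxiliary material -/

section Aux

open CategoryTheory Limits

variable {R : Type u} [Ring R]

lemma ModuleCat.subsingleton_iff_isZero' {S : Type*} [Ring S] (M : ModuleCat.{u} S) :
    Subsingleton M ↔ IsZero M := by
  constructor
  · intro h; exact ModuleCat.isZero_of_subsingleton M
  · intro h
    have h0 : ∀ x : M, x = 0 := fun x => by
      have hh : (𝟙 M : M ⟶ M) = (0 : M ⟶ M) := h.eq_of_src _ _
      calc x = (𝟙 M : M ⟶ M).hom x := rfl
      _ = (0 : M ⟶ M).hom x := by rw [hh]
      _ = 0 := rfl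
    exact ⟨fun a b => (h0 a).trans (h0 b).symm⟩

/-- Build a `ProjectiveResolution` from concrete linear-algebra data. -/
noncomputable def buildRes (G : ModuleCat.{u} R) (Q : ℕ → ModuleCat.{u} R)
    (δ : ∀ n, Q (n+1) →ₗ[R] Q n) (ε : Q 0 →ₗ[R] G)
    (hQ : ∀ n, Module.Projective R (Q n))
    (hε : Function.Surjective ε)
    (h0 : Function.Exact (δ 0) ε)
    (hδ : ∀ n, Function.Exact (δ (n+1)) (δ n)) :
    ProjectiveResolution G where
  complex := ChainComplex.of Q (fun n => ModuleCat.ofHom (δ n)) (fun n => by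
    ext x
    exact (hδ n).apply_apply_eq_zero x)
  projective n := by haveI := hQ n; infer_instance
  π := (ChainComplex.toSingle₀Equiv _ _).symm ⟨ModuleCat.ofHom ε, by
    show (ChainComplex.of Q (fun n => ModuleCat.ofHom (δ n)) _).d (0+1) 0 ≫ ModuleCat.ofHom ε = 0
    rw [show (ChainComplex.of Q (fun n => ModuleCat.ofHom (δ n)) _).d (0+1) 0
      = ModuleCat.ofHom (δ 0) from ChainComplex.of_d Q (fun n => ModuleCat.ofHom (δ n)) 0]
    ext x
    exact h0.apply_apply_eq_zero x⟩
  quasiIso := ⟨fun n => by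
    cases n with
    | zero =>
      rw [ChainComplex.quasiIsoAt₀_iff, ShortComplex.quasiIso_iff_of_zeros']
      · constructor
        · rw [ShortComplex.ShortExact.moduleCat_exact_iff_function_exact]
          exact h0
        · rw [ModuleCat.epi_iff_surjective]
          exact hε
      all_goals rfl
    | succ n =>
      rw [quasiIsoAt_iff_exactAt' _ _ (ChainComplex.exactAt_succ_single_obj _ _)]
      rw [HomologicalComplex.exactAt_iff' _ (n+2) (n+1) n (by simp) (by simp)]
      rw [ShortComplex.ShortExact.moduleCat_exact_iff_function_exact]
      show Function.Exact
        (ChainComplex.of.d Q (fun n => ModuleCat.ofHom (δ n)) (n+1+1) (n+1)).hom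
        (ChainComplex.of.d Q (fun n => ModuleCat.ofHom (δ n)) (n+1) n).hom
      rw [ChainComplex.of_d, ChainComplex.of_d]
      exact hδ n⟩

lemma exact_precomp_iff {A B C Y : ModuleCat.{u} R} (a : B ⟶ A) (b : C ⟶ B) :
    Function.Exact (fun f : A ⟶ Y => a ≫ f) (fun f : B ⟶ Y => b ≫ f) ↔
    Function.Exact (fun f : A →ₗ[R] Y => f ∘ₗ a.hom) (fun f : B →ₗ[R] Y => f ∘ₗ b.hom) := by
  constructor
  · intro h g
    have e := h (ModuleCat.ofHom g)
    constructor
    · intro hg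
      obtain ⟨f, hf⟩ := e.mp (by ext x; exact LinearMap.congr_fun hg x)
      exact ⟨f.hom, congrArg ModuleCat.Hom.hom hf⟩
    · rintro ⟨f, rfl⟩
      have := e.mpr ⟨ModuleCat.ofHom f, rfl⟩
      exact congrArg ModuleCat.Hom.hom this
  · intro h g
    have e := h g.hom
    constructor
    · intro hg
      obtain ⟨f, hf⟩ := e.mp (congrArg ModuleCat.Hom.hom hg)
      exact ⟨ModuleCat.ofHom f, by ext x; exact LinearMap.congr_fun hf x⟩
    · rintro ⟨f, rfl⟩
      have := e.mpr ⟨f.hom, rfl⟩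
      ext x; exact LinearMap.congr_fun this x

lemma ext_iff_of_resolution (G : ModuleCat.{u} R)
    (P : ProjectiveResolution G)
    (i : ℕ) (Y : ModuleCat.{u} R) :
    Subsingleton (((Ext ℤ (ModuleCat.{u} R) (i+1)).obj (Opposite.op G)).obj Y)
      ↔ Function.Exact (fun f : P.complex.X i →ₗ[R] Y => f ∘ₗ (P.complex.d (i+1) i).hom)
          (fun f : P.complex.X (i+1) →ₗ[R] Y => f ∘ₗ (P.complex.d (i+2) (i+1)).hom) := by
  have iso := P.isoExt (R := ℤ) (i+1) Y
  let K := P.complex.linearYonedaObj ℤ Y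
  rw [ModuleCat.subsingleton_iff_isZero', iso.isZero_iff,
    ← HomologicalComplex.exactAt_iff_isZero_homology,
    HomologicalComplex.exactAt_iff' _ i (i+1) (i+2) (by simp) (by simp),
    ShortComplex.ShortExact.moduleCat_exact_iff_function_exact]
  exact exact_precomp_iff (P.complex.d (i+1) i) (P.complex.d (i+2) (i+1))

lemma subsingleton_ext_iff (G : ModuleCat.{u} R) (Q : ℕ → ModuleCat.{u} R)
    (δ : ∀ n, Q (n+1) →ₗ[R] Q n) (ε : Q 0 →ₗ[R] G)
    (hQ : ∀ n, Module.Projective R (Q n))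
    (hε : Function.Surjective ε)
    (h0 : Function.Exact (δ 0) ε)
    (hδ : ∀ n, Function.Exact (δ (n+1)) (δ n))
    (i : ℕ) (Y : ModuleCat.{u} R) :
    Subsingleton (((Ext ℤ (ModuleCat.{u} R) (i+1)).obj (Opposite.op G)).obj Y)
      ↔ Function.Exact (fun f : Q i →ₗ[R] Y => f ∘ₗ δ i)
          (fun g : Q (i+1) →ₗ[R] Y => g ∘ₗ δ (i+1)) := by
  have hsq : ∀ n, CategoryTheory.CategoryStruct.comp (X := Q (n+1+1)) (Y := Q (n+1)) (Z := Q n)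
      (ModuleCat.ofHom (δ (n+1))) (ModuleCat.ofHom (δ n)) = 0 := fun n => by
    ext x; exact (hδ n).apply_apply_eq_zero x
  rw [ext_iff_of_resolution G (buildRes G Q δ ε hQ hε h0 hδ) i Y,
    show (buildRes G Q δ ε hQ hε h0 hδ).complex.d (i+1) i = ModuleCat.ofHom (δ i)
      from ChainComplex.of_d Q (fun n => ModuleCat.ofHom (δ n)) i,
    show (buildRes G Q δ ε hQ hε h0 hδ).complex.d (i+2) (i+1) = ModuleCat.ofHom (δ (i+1))
      from ChainComplex.of_d Q (fun n => ModuleCat.ofHom (δ n)) (i+1)]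
  exact Iff.rfl

/-! ### A concrete free resolution -/

noncomputable def resK (G : ModuleCat.{u} R) : ℕ → ModuleCat.{u} R
  | 0 => G
  | n+1 => ModuleCat.of R (LinearMap.ker
      (Finsupp.linearCombination R (_root_.id : resK G n → resK G n)))

noncomputable def resQ (G : ModuleCat.{u} R) (n : ℕ) : ModuleCat.{u} R :=
  ModuleCat.of R ((resK G n) →₀ R)

noncomputable def resπ (G : ModuleCat.{u} R) (n : ℕ) : resQ G n →ₗ[R] resK G n :=
  Finsupp.linearCombination R _root_.id

lemma resπ_surjective (G : ModuleCat.{u} R) (n : ℕ) : Function.Surjective (resπ G n) :=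
  fun m => ⟨Finsupp.single m 1, by
    show (Finsupp.linearCombination R _root_.id) (Finsupp.single m 1) = m
    rw [Finsupp.linearCombination_single, one_smul]
    rfl⟩

noncomputable def resδ (G : ModuleCat.{u} R) (n : ℕ) : resQ G (n+1) →ₗ[R] resQ G n :=
  (LinearMap.ker (resπ G n)).subtype ∘ₗ (resπ G (n+1))

lemma resQ_projective (G : ModuleCat.{u} R) (n : ℕ) : Module.Projective R (resQ G n) :=
  inferInstanceAs (Module.Projective R ((resK G n) →₀ R))

lemma range_resδ (G : ModuleCat.{u} R) (n : ℕ) :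
    LinearMap.range (resδ G n) = LinearMap.ker (resπ G n) := by
  ext y
  constructor
  · rintro ⟨x, rfl⟩
    exact (resπ G (n+1) x).2
  · intro hy
    obtain ⟨x, hx⟩ := resπ_surjective G (n+1) (⟨y, hy⟩ : LinearMap.ker (resπ G n))
    exact ⟨x, congrArg Subtype.val hx⟩

lemma ker_resδ (G : ModuleCat.{u} R) (n : ℕ) :
    LinearMap.ker (resδ G n) = LinearMap.ker (resπ G (n+1)) := by
  ext x
  rw [LinearMap.mem_ker, LinearMap.mem_ker]
  exact ⟨fun h => Subtype.ext h, fun h => (congrArg Subtype.val h).trans rfl⟩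

lemma resδ_exact (G : ModuleCat.{u} R) (n : ℕ) :
    Function.Exact (resδ G (n+1)) (resδ G n) := by
  rw [LinearMap.exact_iff, ker_resδ, range_resδ]

noncomputable def resε (G : ModuleCat.{u} R) : resQ G 0 →ₗ[R] G := resπ G 0

lemma resε_surjective (G : ModuleCat.{u} R) : Function.Surjective (resε G) :=
  resπ_surjective G 0

lemma resε_exact (G : ModuleCat.{u} R) : Function.Exact (resδ G 0) (resε G) := by
  rw [LinearMap.exact_iff, range_resδ]; rfl

end Aux


section Main

open CategoryTheory Limits

variable {R : Type u} [Ring R] {𝒳 : ModuleCat.{u} R → Prop}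

namespace XCompleteResolution

variable (C : XCompleteResolution R 𝒳)

/-- The negative (left) part of a complete resolution. -/
noncomputable def nQ (k : ℕ) : ModuleCat.{u} R := C.P (Int.negSucc k)

/-- The differentials of the negative part. -/
noncomputable def nδ (k : ℕ) : C.nQ (k+1) →ₗ[R] C.nQ k := C.d (Int.negSucc (k+1))

lemma mem_ker (x : C.P (Int.negSucc 0)) :
    C.d (Int.negSucc 0) x ∈ LinearMap.ker (C.d 0) :=
  LinearMap.mem_ker.mpr ((C.exact (Int.negSucc 0)).apply_apply_eq_zero x)

variable {G : ModuleCat.{u} R} (e : G ≃ₗ[R] LinearMap.ker (C.d 0))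

/-- The augmentation of the negative part. -/
noncomputable def nε : C.nQ 0 →ₗ[R] G :=
  e.symm.toLinearMap ∘ₗ LinearMap.codRestrict (LinearMap.ker (C.d 0)) (C.d (Int.negSucc 0))
    (fun x => C.mem_ker x)

lemma nε_surjective : Function.Surjective (C.nε e) := by
  intro g
  obtain ⟨x, hx⟩ := (C.exact (Int.negSucc 0) ((e g : C.P 0))).mp
    (LinearMap.mem_ker.mp (e g).2)
  refine ⟨x, ?_⟩
  show e.symm (LinearMap.codRestrict _ _ _ x) = g
  have hh : LinearMap.codRestrict (LinearMap.ker (C.d 0)) (C.d (Int.negSucc 0))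
      (fun x => C.mem_ker x) x = e g := Subtype.ext hx
  exact (congrArg e.symm hh).trans (e.symm_apply_apply g)

lemma nε_exact : Function.Exact (C.nδ 0) (C.nε e) := by
  intro y
  have h1 : C.nε e y = 0 ↔ C.d (Int.negSucc 0) y = 0 := by
    rw [nε]
    simp only [LinearMap.coe_comp, Function.comp_apply, LinearEquiv.coe_coe,
      LinearEquiv.map_eq_zero_iff]
    rw [Subtype.ext_iff]
    rfl
  rw [h1]
  exact C.exact (Int.negSucc 1) y

lemma forward_ext (C : XCompleteResolution R 𝒳) {G : ModuleCat.{u} R}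
    (e : G ≃ₗ[R] LinearMap.ker (C.d 0))
    (Y : ModuleCat.{u} R) (hY : 𝒳 Y) (j : ℕ) :
    Subsingleton (((Ext ℤ (ModuleCat.{u} R) (j+1)).obj (Opposite.op G)).obj Y) :=
  (subsingleton_ext_iff G (nQ C) (nδ C) (nε C e) (fun _ => C.projective _)
    (nε_surjective C e) (nε_exact C e)
    (fun k => C.exact (Int.negSucc (k+2))) j Y).mpr
    (C.homExact Y hY (Int.negSucc (j+2)))

end XCompleteResolution

lemma exists_factor {M N Y' : Type u} [AddCommGroup M] [Module R M] [AddCommGroup N] [Module R N]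
    [AddCommGroup Y'] [Module R Y'] (ε : M →ₗ[R] N) (hε : Function.Surjective ε)
    (g : M →ₗ[R] Y') (hg : LinearMap.ker ε ≤ LinearMap.ker g) :
    ∃ h : N →ₗ[R] Y', h ∘ₗ ε = g := by
  refine ⟨(Submodule.liftQ (LinearMap.ker ε) g hg) ∘ₗ
    ((LinearMap.quotKerEquivOfSurjective ε hε).symm :
      N →ₗ[R] (M ⧸ LinearMap.ker ε)), ?_⟩
  ext x
  have hq : (LinearMap.quotKerEquivOfSurjective ε hε).symm (ε x)
      = Submodule.Quotient.mk x := by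
    rw [LinearEquiv.symm_apply_eq]
    simp [LinearMap.quotKerEquivOfSurjective, LinearMap.quotKerEquivRange_apply_mk]
  show Submodule.liftQ (LinearMap.ker ε) g hg
    ((LinearMap.quotKerEquivOfSurjective ε hε).symm (ε x)) = g x
  rw [hq, Submodule.liftQ_apply]

/-- The modules of the glued complete resolution. -/
noncomputable def gluedP (G : ModuleCat.{u} R) (P : ℕ → ModuleCat.{u} R) :
    ℤ → ModuleCat.{u} R
  | .ofNat k => P k
  | .negSucc k => resQ G k

/-- The differentials of the glued complete resolution. -/
noncomputable def gluedD (G : ModuleCat.{u} R) (P : ℕ → ModuleCat.{u} R)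
    (ι : G →ₗ[R] P 0) (d : ∀ n, P n →ₗ[R] P (n+1)) :
    ∀ n : ℤ, gluedP G P n →ₗ[R] gluedP G P (n + 1)
  | .ofNat k => d k
  | .negSucc 0 => ι ∘ₗ resε G
  | .negSucc (k+1) => resδ G k

end Main

/-- `G` is `𝒳`-Gorenstein projective iff `Ext^i_R(G, Y) = 0` for every `Y ∈ 𝒳` and
every `i > 0`, and `G` admits a right projective resolution
`0 → G → P^0 → P^1 → ⋯` which stays exact after applying `Hom_R(-, Y)` for `Y ∈ 𝒳`. -/
theorem xGorensteinProjective_iff_ext_vanishing_and_right_resolution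
    (R : Type u) [Ring R] (𝒳 : ModuleCat.{u} R → Prop)
    (h𝒳 : ∀ P : ModuleCat.{u} R, Module.Projective R P → 𝒳 P)
    (G : ModuleCat.{u} R) :
    XGorensteinProjective R 𝒳 G ↔
      ((∀ (i : ℕ), 0 < i → ∀ Y : ModuleCat.{u} R, 𝒳 Y →
          Subsingleton (((Ext ℤ (ModuleCat.{u} R) i).obj (Opposite.op G)).obj Y)) ∧
        ∃ (P : ℕ → ModuleCat.{u} R) (ι : G →ₗ[R] P 0) (d : ∀ n, P n →ₗ[R] P (n + 1)),
          (∀ n, Module.Projective R (P n)) ∧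
          Function.Injective ι ∧ Function.Exact ι (d 0) ∧
          (∀ n, Function.Exact (d n) (d (n + 1))) ∧
          (∀ Y : ModuleCat.{u} R, 𝒳 Y →
            (Function.Surjective (fun f : P 0 →ₗ[R] Y => f ∘ₗ ι)) ∧
            Function.Exact (fun f : P 1 →ₗ[R] Y => f ∘ₗ d 0)
              (fun f : P 0 →ₗ[R] Y => f ∘ₗ ι) ∧
            ∀ n, Function.Exact (fun f : P (n + 1 + 1) →ₗ[R] Y => f ∘ₗ d (n + 1))
              (fun f : P (n + 1) →ₗ[R] Y => f ∘ₗ d n))) := by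
  constructor
  · rintro ⟨C, ⟨e⟩⟩
    constructor
    · rintro i hi Y hY
      obtain ⟨j, rfl⟩ : ∃ j, i = j + 1 := ⟨i - 1, by omega⟩
      exact C.forward_ext e Y hY j
    · refine ⟨fun n => C.P (Int.ofNat n),
        (LinearMap.ker (C.d 0)).subtype ∘ₗ (e : G →ₗ[R] LinearMap.ker (C.d 0)),
        fun n => C.d (Int.ofNat n),
        fun n => C.projective _, ?_, ?_, fun n => C.exact (Int.ofNat n), ?_⟩
      · exact (LinearMap.ker (C.d 0)).injective_subtype.comp e.injective
      · -- Exact ι (d 0)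
        intro y
        constructor
        · intro hy
          exact ⟨e.symm ⟨y, LinearMap.mem_ker.mpr hy⟩, by simp⟩
        · rintro ⟨g, rfl⟩
          exact (e g).2
      · intro Y hY
        refine ⟨?_, ?_, fun n => C.homExact Y hY (Int.ofNat n)⟩
        · -- surjectivity of (f ↦ f ∘ₗ ι)
          intro h
          have hz0 : (h ∘ₗ C.nε e) ∘ₗ C.d (Int.negSucc 1) = 0 := by
            ext x
            show h (C.nε e (C.d (Int.negSucc 1) x)) = 0
            rw [show C.nε e (C.d (Int.negSucc 1) x) = 0
              from (C.nε_exact e).apply_apply_eq_zero x, map_zero]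
          obtain ⟨f, hf⟩ := (C.homExact Y hY (Int.negSucc 1) (h ∘ₗ C.nε e)).mp hz0
          refine ⟨f, ?_⟩
          ext x
          show f ((LinearMap.ker (C.d 0)).subtype (e x)) = h x
          obtain ⟨z, hz⟩ := (C.exact (Int.negSucc 0) ((e x : C.P 0))).mp
            (LinearMap.mem_ker.mp (e x).2)
          have h1 : ((LinearMap.ker (C.d 0)).subtype (e x) : C.P 0)
              = C.d (Int.negSucc 0) z := hz.symm
          rw [h1]
          have h2 : f (C.d (Int.negSucc 0) z) = h (C.nε e z) := LinearMap.congr_fun hf z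
          rw [h2]
          congr 1
          show e.symm (LinearMap.codRestrict _ _ _ z) = x
          have h3 : LinearMap.codRestrict (LinearMap.ker (C.d 0)) (C.d (Int.negSucc 0))
              (fun w => C.mem_ker w) z = e x := Subtype.ext hz
          exact (congrArg e.symm h3).trans (e.symm_apply_apply x)
        · -- exactness at Hom(P 0, Y)
          intro g
          have key : g ∘ₗ ((LinearMap.ker (C.d 0)).subtype
                ∘ₗ (e : G →ₗ[R] LinearMap.ker (C.d 0))) = 0
              ↔ g ∘ₗ C.d (Int.negSucc 0) = 0 := by
            constructor
            · intro hg
              ext z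
              show g (C.d (Int.negSucc 0) z) = 0
              have h3 : C.d (Int.negSucc 0) z = (LinearMap.ker (C.d 0)).subtype
                  (e (e.symm ⟨C.d (Int.negSucc 0) z, C.mem_ker z⟩)) := by
                rw [LinearEquiv.apply_symm_apply]
                rfl
              rw [h3]
              exact LinearMap.congr_fun hg (e.symm ⟨C.d (Int.negSucc 0) z, C.mem_ker z⟩)
            · intro hg
              ext x
              show g ((LinearMap.ker (C.d 0)).subtype (e x)) = 0
              obtain ⟨z, hz⟩ := (C.exact (Int.negSucc 0) ((e x : C.P 0))).mp
                (LinearMap.mem_ker.mp (e x).2)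
              rw [show ((LinearMap.ker (C.d 0)).subtype (e x) : C.P 0)
                = C.d (Int.negSucc 0) z from hz.symm]
              exact LinearMap.congr_fun hg z
          exact key.trans (C.homExact Y hY (Int.negSucc 0) g)
  · rintro ⟨hext, P, ι, d, hproj, hinj, hexa0, hexa, hhom⟩
    refine ⟨⟨gluedP G P, gluedD G P ι d, ?_, ?_, ?_⟩, ⟨?_⟩⟩
    · -- projectivity
      rintro (k | k)
      · exact hproj k
      · exact resQ_projective G k
    · -- exactness
      intro n
      match n with
      | Int.ofNat k => exact hexa k
      | Int.negSucc 0 =>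
        -- Exact (ι ∘ₗ resε G) (d 0)
        intro y
        constructor
        · intro hy
          obtain ⟨g, hg⟩ := (hexa0 y).mp hy
          obtain ⟨q, hq⟩ := resε_surjective G g
          exact ⟨q, by show ι (resε G q) = y; rw [hq, hg]⟩
        · rintro ⟨q, rfl⟩
          exact (hexa0 _).mpr ⟨resε G q, rfl⟩
      | Int.negSucc 1 =>
        -- Exact (resδ G 0) (ι ∘ₗ resε G)
        intro y
        constructor
        · intro hy
          have h1 : resε G y = 0 := by
            apply hinj
            rw [map_zero]
            exact hy
          exact (resε_exact G y).mp h1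
        · rintro ⟨q, rfl⟩
          show ι (resε G (resδ G 0 q)) = 0
          rw [(resε_exact G).apply_apply_eq_zero q, map_zero]
      | Int.negSucc (k+2) => exact resδ_exact G k
    · -- homExact
      intro Y hY n
      match n with
      | Int.ofNat k => exact (hhom Y hY).2.2 k
      | Int.negSucc 0 =>
        intro g
        have h1 : g ∘ₗ (ι ∘ₗ resε G) = 0 ↔ g ∘ₗ ι = 0 := by
          constructor
          · intro h
            ext x
            obtain ⟨q, rfl⟩ := resε_surjective G x
            exact LinearMap.congr_fun h q
          · intro h
            ext q
            show g (ι (resε G q)) = 0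
            exact LinearMap.congr_fun h (resε G q)
        exact h1.trans ((hhom Y hY).2.1 g)
      | Int.negSucc 1 =>
        intro g
        constructor
        · intro hg
          have hle : LinearMap.ker (resε G) ≤ LinearMap.ker g := by
            intro x hx
            obtain ⟨q, rfl⟩ := (resε_exact G x).mp (LinearMap.mem_ker.mp hx)
            exact LinearMap.congr_fun hg q
          obtain ⟨h, hh⟩ := exists_factor (resε G) (resε_surjective G) g hle
          obtain ⟨f, hf⟩ := (hhom Y hY).1 h
          refine ⟨f, ?_⟩
          show f ∘ₗ (ι ∘ₗ resε G) = g
          rw [show f ∘ₗ (ι ∘ₗ resε G) = (f ∘ₗ ι) ∘ₗ resε G from rfl, show f ∘ₗ ι = h from hf, hh]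
        · rintro ⟨f, rfl⟩
          ext q
          show f (ι (resε G (resδ G 0 q))) = 0
          rw [(resε_exact G).apply_apply_eq_zero q, map_zero]
          exact map_zero f
      | Int.negSucc (k+2) =>
        exact (subsingleton_ext_iff G (resQ G) (resδ G) (resε G) (resQ_projective G)
          (resε_surjective G) (resε_exact G) (resδ_exact G) k Y).mp
          (hext (k+1) (Nat.succ_pos k) Y hY)
    · -- the kernel is G
      refine LinearEquiv.ofBijective
        (LinearMap.codRestrict (LinearMap.ker (d 0)) ι
          (fun x => LinearMap.mem_ker.mpr ((hexa0 (ι x)).mpr ⟨x, rfl⟩)))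
        ⟨fun a b hab => hinj (congrArg Subtype.val hab), ?_⟩
      rintro ⟨y, hy⟩
      obtain ⟨x, hx⟩ := (hexa0 y).mp (LinearMap.mem_ker.mp hy)
      exact ⟨x, Subtype.ext hx⟩
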